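/- If w ∈ S_n does not lie in any proper standard parabolic subgroup (i.e., its support is all of {s_1,...,s_{n-1}}), then for every u of length 1 in [e,w], the number of elements of [e,w] covering u is at most n. -/

import Mathlib

namespace SG

variable {α : Type*} [LinearOrder α] [Fintype α]

/-- The length (number of inversions) of a permutation. -/
noncomputable def len (w : Equiv.Perm α) : ℕ :=
  Set.ncard {p : α × α | p.1 < p.2 ∧ w p.2 < w p.1}

/-- One step of the Bruhat order: multiply by a transposition, increasing length. -/
def lt1 (u v : Equiv.Perm α) : Prop :=
  (∃ i j : α, i ≠ j ∧ v = u * Equiv.swap i j) ∧ len u < len v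

/-- The (strong) Bruhat order. -/
def le (u v : Equiv.Perm α) : Prop := Relation.ReflTransGen lt1 u v

/-- `covers u v` means `v` covers `u` in Bruhat order: `u ≤ v` and `ℓ(u) + 1 = ℓ(v)`. -/
def covers (u v : Equiv.Perm α) : Prop := le u v ∧ len u + 1 = len v

/-- `(i, j)` is a minimal inversion of `w`. -/
def MinimalInversion (w : Equiv.Perm α) (i j : α) : Prop :=
  i < j ∧ w j < w i ∧ ¬ ∃ k, i < k ∧ k < j ∧ w j < w k ∧ w k < w i

/-- `w` contains the pattern given by the values `π 0, …, π (m-1)`. -/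
def Contains (w : Equiv.Perm α) {m : ℕ} (π : Fin m → ℕ) : Prop :=
  ∃ f : Fin m → α, StrictMono f ∧ ∀ a b : Fin m, π a < π b ↔ w (f a) < w (f b)

def Avoids (w : Equiv.Perm α) {m : ℕ} (π : Fin m → ℕ) : Prop := ¬ Contains w π

/-- The set of elements of length `k` in the Bruhat interval `[e, w]`. -/
def Pk (w : Equiv.Perm α) (k : ℕ) : Set (Equiv.Perm α) := {u | le u w ∧ len u = k}

/-- The number of elements of `[e, w]` covering `u`. -/
noncomputable def udeg (w u : Equiv.Perm α) : ℕ := {v | le v w ∧ covers u v}.ncard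

/-- The number of elements of `[e, w]` covered by `u`. -/
noncomputable def ddeg (w u : Equiv.Perm α) : ℕ := {v | le v w ∧ covers v u}.ncard

end SG

open SG Equiv

section Aux

set_option linter.unusedSectionVars false

variable {α : Type*} [LinearOrder α] [Fintype α]

lemma len_le_of_le {u v : Equiv.Perm α} (h : le u v) : len u ≤ len v := by
  induction h with
  | refl => exact Nat.le_refl _
  | tail _ hstep ih => exact ih.trans hstep.2.le

lemma covers_step {u v : Equiv.Perm α} (h : covers u v) :
    ∃ a b : α, a ≠ b ∧ v = u * Equiv.swap a b := by
  obtain ⟨hle, hlen⟩ := h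
  rcases Relation.ReflTransGen.cases_head hle with rfl | ⟨m, hm, hmv⟩
  · omega
  · obtain ⟨⟨a, b, hab, rfl⟩, hl⟩ := hm
    rcases Relation.ReflTransGen.cases_head hmv with rfl | ⟨m', hm', hm'v⟩
    · exact ⟨a, b, hab, rfl⟩
    · have h1 := len_le_of_le hm'v
      have h2 := hm'.2
      omega

lemma len_one : len (1 : Equiv.Perm α) = 0 := by
  have : {p : α × α | p.1 < p.2 ∧ (1 : Equiv.Perm α) p.2 < (1 : Equiv.Perm α) p.1} = ∅ := by
    ext p; simp only [Set.mem_setOf_eq, Set.mem_empty_iff_false, iff_false, not_and,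
      Equiv.Perm.one_apply]
    exact fun h => not_lt.mpr h.le
  rw [len, this, Set.ncard_empty]

lemma eq_one_of_len_eq_zero {v : Equiv.Perm α} (h : len v = 0) : v = 1 := by
  have hempty : {p : α × α | p.1 < p.2 ∧ v p.2 < v p.1} = ∅ :=
    (Set.ncard_eq_zero (Set.toFinite _)).mp h
  have hmono : StrictMono v := by
    intro x y hxy
    rcases lt_trichotomy (v x) (v y) with h' | h' | h'
    · exact h'
    · exact absurd (v.injective h') hxy.ne
    · exact absurd (Set.eq_empty_iff_forall_notMem.mp hempty (x, y)) (by exact fun hc => hc ⟨hxy, h'⟩)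
  ext x
  have h1 : (StrictMono.orderIsoOfSurjective ⇑v hmono v.surjective) x = x := by
    rw [Subsingleton.elim (StrictMono.orderIsoOfSurjective ⇑v hmono v.surjective)
      (OrderIso.refl α)]; rfl
  simpa [StrictMono.coe_orderIsoOfSurjective] using h1

lemma three_le_len {v : Equiv.Perm α} {p q r : α × α}
    (hp : p.1 < p.2 ∧ v p.2 < v p.1) (hq : q.1 < q.2 ∧ v q.2 < v q.1)
    (hr : r.1 < r.2 ∧ v r.2 < v r.1)
    (hpq : p ≠ q) (hpr : p ≠ r) (hqr : q ≠ r) : 3 ≤ len v := by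
  have hsub : ({p, q, r} : Set (α × α)) ⊆ {x : α × α | x.1 < x.2 ∧ v x.2 < v x.1} := by
    rintro x (rfl | rfl | rfl) <;> assumption
  have h3 : ({p, q, r} : Set (α × α)).ncard = 3 := by
    rw [Set.ncard_insert_of_notMem (by simp [hpq, hpr]) (Set.toFinite _), Set.ncard_pair hqr]
  calc (3 : ℕ) = ({p, q, r} : Set (α × α)).ncard := h3.symm
    _ ≤ len v := Set.ncard_le_ncard hsub (Set.toFinite _)

lemma len_eq_one_char {u : Equiv.Perm α} (h : len u = 1) :
    ∃ c c' : α, c ⋖ c' ∧ u = Equiv.swap c c' := by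
  obtain ⟨p, hp⟩ := Set.ncard_eq_one.mp h
  obtain ⟨c, c'⟩ := p
  have hmem : (c, c') ∈ {x : α × α | x.1 < x.2 ∧ u x.2 < u x.1} := by
    rw [hp]; exact rfl
  obtain ⟨hlt, hinv⟩ := hmem
  have honly : ∀ x y : α, x < y → u y < u x → x = c ∧ y = c' := by
    intro x y h1 h2
    have : (x, y) ∈ ({(c, c')} : Set (α × α)) := by rw [← hp]; exact ⟨h1, h2⟩
    exact ⟨congrArg Prod.fst this, congrArg Prod.snd this⟩
  have hcov : c ⋖ c' := by
    refine ⟨hlt, fun k hk1 hk2 => ?_⟩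
    have h1 : u c < u k := by
      rcases lt_trichotomy (u c) (u k) with h' | h' | h'
      · exact h'
      · exact absurd (u.injective h') hk1.ne
      · exact absurd (honly c k hk1 h').2 hk2.ne
    have h2 : u k < u c' := by
      rcases lt_trichotomy (u k) (u c') with h' | h' | h'
      · exact h'
      · exact absurd (u.injective h') hk2.ne
      · exact absurd (honly k c' hk2 h').1 hk1.ne'
    exact absurd (h1.trans h2) (not_lt.mpr hinv.le)
  refine ⟨c, c', hcov, ?_⟩
  have hz : len (u * Equiv.swap c c') = 0 := by
    rw [len, Set.ncard_eq_zero (Set.toFinite _), Set.eq_empty_iff_forall_notMem]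
    rintro ⟨x, y⟩ ⟨hxy, hvxy⟩
    simp only [Equiv.Perm.mul_apply] at hvxy
    set s := Equiv.swap c c' with hs
    rcases lt_trichotomy (s x) (s y) with h' | h' | h'
    · -- then (s x, s y) is an inversion of u, so s x = c, s y = c'
      obtain ⟨h1, h2⟩ := honly (s x) (s y) h' hvxy
      have hx : x = c' := by
        have := congrArg s h1
        rwa [Equiv.swap_apply_self, Equiv.swap_apply_left] at this
      have hy : y = c := by
        have := congrArg s h2
        rwa [Equiv.swap_apply_self, Equiv.swap_apply_right] at this
      rw [hx, hy] at hxy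
      exact absurd hxy (not_lt.mpr hlt.le)
    · exact absurd (Equiv.injective s h') hxy.ne
    · -- s reverses x < y : case on x,y ∈ {c, c'}
      by_cases hxc : x = c
      · by_cases hyc' : y = c'
        · rw [hxc, hyc', Equiv.swap_apply_left, Equiv.swap_apply_right] at hvxy
          exact absurd hvxy (not_lt.mpr hinv.le)
        · have hyc : y ≠ c := fun hh => absurd (hxc ▸ hh ▸ hxy) (lt_irrefl _)
          rw [Equiv.swap_apply_of_ne_of_ne hyc hyc', hxc, Equiv.swap_apply_left] at h'
          exact hcov.2 (hxc ▸ hxy) h'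
      · by_cases hxc' : x = c'
        · -- x = c', y > c', s x = c < s y; s y ∈ {y, c'}; y ≠ c (y > c'), y ≠ c' so s y = y
          have hyc : y ≠ c := fun hh => absurd (hh ▸ hxc' ▸ hxy) (not_lt.mpr hcov.1.le)
          have hyc' : y ≠ c' := fun hh => absurd (hxc' ▸ hh ▸ hxy) (lt_irrefl _)
          rw [Equiv.swap_apply_of_ne_of_ne hyc hyc', hxc', Equiv.swap_apply_right] at h'
          exact absurd (hxy.trans' (hxc' ▸ hcov.1 : c < x)) (not_lt.mpr h'.le)
        · rw [Equiv.swap_apply_of_ne_of_ne hxc hxc'] at h'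
          by_cases hyc : y = c
          · rw [hyc, Equiv.swap_apply_left] at h'
            exact absurd (hxy.trans (hyc ▸ hcov.1 : y < c')) (not_lt.mpr h'.le)
          · by_cases hyc' : y = c'
            · rw [hyc', Equiv.swap_apply_right] at h'
              exact hcov.2 h' (hyc' ▸ hxy)
            · rw [Equiv.swap_apply_of_ne_of_ne hyc hyc'] at h'
              exact absurd hxy (not_lt.mpr h'.le)
  have h1 := eq_one_of_len_eq_zero hz
  have := congrArg (· * Equiv.swap c c') h1
  simpa [mul_assoc] using this

lemma key_dichotomy {c c' a b : α} (hcc : c ⋖ c') (hab : a < b)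
    (hk : ∃ k, a < k ∧ k < b)
    (hlen : len (Equiv.swap c c' * Equiv.swap a b) = 2) :
    (a = c ∧ c' ⋖ b) ∨ (b = c' ∧ a ⋖ c) := by
  set v := Equiv.swap c c' * Equiv.swap a b with hv
  obtain ⟨k0, hk01, hk02⟩ := hk
  by_cases hac : a = c
  · subst hac
    -- b ≠ c' since otherwise k0 lies strictly between a=c and b=c'
    have hbc' : b ≠ c' := fun h => hcc.2 hk01 (h ▸ hk02)
    have hc'b : c' < b := lt_of_le_of_ne (not_lt.mp fun h => hcc.2 hab h) (Ne.symm hbc')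
    by_cases hcb : c' ⋖ b
    · exact Or.inl ⟨rfl, hcb⟩
    · exfalso
      obtain ⟨k, hk1, hk2⟩ := exists_lt_lt_of_not_covBy hc'b hcb
      have hbc : b ≠ a := hab.ne'
      have ec : v a = b := by
        rw [hv, Equiv.Perm.mul_apply, Equiv.swap_apply_left,
          Equiv.swap_apply_of_ne_of_ne hbc hbc']
      have ec' : v c' = a := by
        rw [hv, Equiv.Perm.mul_apply,
          Equiv.swap_apply_of_ne_of_ne hcc.1.ne' hbc'.symm, Equiv.swap_apply_right]
      have ek : v k = k := by
        have h1 : k ≠ a := (hcc.1.trans hk1).ne'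
        have h2 : k ≠ b := hk2.ne
        have h3 : k ≠ c' := hk1.ne'
        rw [hv, Equiv.Perm.mul_apply, Equiv.swap_apply_of_ne_of_ne h1 h2,
          Equiv.swap_apply_of_ne_of_ne h1 h3]
      have eb : v b = c' := by
        rw [hv, Equiv.Perm.mul_apply, Equiv.swap_apply_right, Equiv.swap_apply_left]
      have h3 := three_le_len (v := v) (p := (a, c')) (q := (a, k)) (r := (a, b))
        ⟨hcc.1, by rw [ec, ec']; exact hab⟩
        ⟨hcc.1.trans hk1, by rw [ec, ek]; exact hk2⟩
        ⟨hab, by rw [ec, eb]; exact hc'b⟩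
        (fun h => hk1.ne (congrArg Prod.snd h))
        (fun h => hbc' (congrArg Prod.snd h).symm)
        (fun h => hk2.ne (congrArg Prod.snd h))
      omega
  · by_cases hbc' : b = c'
    · subst hbc'
      -- a < c since a ≠ c and a cannot lie strictly between c and b = c'
      have hacc : a < c := by
        rcases lt_trichotomy a c with h | h | h
        · exact h
        · exact absurd h hac
        · exact absurd hab (hcc.2 h)
      by_cases hax : a ⋖ c
      · exact Or.inr ⟨rfl, hax⟩
      · exfalso
        obtain ⟨k, hk1, hk2⟩ := exists_lt_lt_of_not_covBy hacc hax
        have ea : v a = c := by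
          rw [hv, Equiv.Perm.mul_apply, Equiv.swap_apply_left, Equiv.swap_apply_right]
        have ek : v k = k := by
          have h1 : k ≠ a := hk1.ne'
          have h2 : k ≠ b := (hk2.trans hcc.1).ne
          have h3 : k ≠ c := hk2.ne
          rw [hv, Equiv.Perm.mul_apply, Equiv.swap_apply_of_ne_of_ne h1 h2,
            Equiv.swap_apply_of_ne_of_ne h3 h2]
        have ec : v c = b := by
          have h1 : c ≠ a := hacc.ne'
          have h2 : c ≠ b := hcc.1.ne
          rw [hv, Equiv.Perm.mul_apply, Equiv.swap_apply_of_ne_of_ne h1 h2,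
            Equiv.swap_apply_left]
        have eb : v b = a := by
          have h1 : a ≠ c := hac
          have h2 : a ≠ b := hab.ne
          rw [hv, Equiv.Perm.mul_apply, Equiv.swap_apply_right,
            Equiv.swap_apply_of_ne_of_ne h1 h2]
        have h3 := three_le_len (v := v) (p := (a, k)) (q := (a, b)) (r := (c, b))
          ⟨hk1, by rw [ea, ek]; exact hk2⟩
          ⟨hab, by rw [ea, eb]; exact hacc⟩
          ⟨hcc.1, by rw [ec, eb]; exact hab⟩
          (fun h => (hk2.trans hcc.1).ne (congrArg Prod.snd h))
          (fun h => hac (congrArg Prod.fst h))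
          (fun h => hac (congrArg Prod.fst h))
        omega
    · by_cases hac' : a = c'
      · subst hac'
        -- b > a = c' ; interior k0 between c' and b
        exfalso
        have hcb : c < b := hcc.1.trans hab
        have ea : v a = b := by
          have h1 : b ≠ c := hcb.ne'
          have h2 : b ≠ a := hab.ne'
          rw [hv, Equiv.Perm.mul_apply, Equiv.swap_apply_left,
            Equiv.swap_apply_of_ne_of_ne h1 h2]
        have eb : v b = c := by
          rw [hv, Equiv.Perm.mul_apply, Equiv.swap_apply_right, Equiv.swap_apply_right]
        have ec : v c = a := by
          have h1 : c ≠ a := hcc.1.ne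
          have h2 : c ≠ b := hcb.ne
          rw [hv, Equiv.Perm.mul_apply, Equiv.swap_apply_of_ne_of_ne h1 h2,
            Equiv.swap_apply_left]
        have ek : v k0 = k0 := by
          have h1 : k0 ≠ a := hk01.ne'
          have h2 : k0 ≠ b := hk02.ne
          have h3 : k0 ≠ c := (hcc.1.trans hk01).ne'
          rw [hv, Equiv.Perm.mul_apply, Equiv.swap_apply_of_ne_of_ne h1 h2,
            Equiv.swap_apply_of_ne_of_ne h3 h1]
        have h3 := three_le_len (v := v) (p := (a, k0)) (q := (a, b)) (r := (c, b))
          ⟨hk01, by rw [ea, ek]; exact hk02⟩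
          ⟨hab, by rw [ea, eb]; exact hcb⟩
          ⟨hcb, by rw [ec, eb]; exact hcc.1⟩
          (fun h => hk02.ne (congrArg Prod.snd h))
          (fun h => hcc.1.ne (congrArg Prod.fst h).symm)
          (fun h => hcc.1.ne (congrArg Prod.fst h).symm)
        omega
      · by_cases hbc : b = c
        · subst hbc
          -- a < b = c, interior k0 between a and c
          exfalso
          have hac'' : a < c' := hab.trans hcc.1
          have ea : v a = c' := by
            rw [hv, Equiv.Perm.mul_apply, Equiv.swap_apply_left, Equiv.swap_apply_left]
          have eb : v b = a := by
            have h1 : a ≠ b := hab.ne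
            have h2 : a ≠ c' := hac''.ne
            rw [hv, Equiv.Perm.mul_apply, Equiv.swap_apply_right,
              Equiv.swap_apply_of_ne_of_ne h1 h2]
          have ec' : v c' = b := by
            have h1 : c' ≠ a := hac''.ne'
            have h2 : c' ≠ b := hcc.1.ne'
            rw [hv, Equiv.Perm.mul_apply, Equiv.swap_apply_of_ne_of_ne h1 h2,
              Equiv.swap_apply_right]
          have ek : v k0 = k0 := by
            have h1 : k0 ≠ a := hk01.ne'
            have h2 : k0 ≠ b := hk02.ne
            have h3 : k0 ≠ c' := (hk02.trans hcc.1).ne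
            rw [hv, Equiv.Perm.mul_apply, Equiv.swap_apply_of_ne_of_ne h1 h2,
              Equiv.swap_apply_of_ne_of_ne h2 h3]
          have h3 := three_le_len (v := v) (p := (a, k0)) (q := (a, b)) (r := (a, c'))
            ⟨hk01, by rw [ea, ek]; exact hk02.trans hcc.1⟩
            ⟨hab, by rw [ea, eb]; exact hac''⟩
            ⟨hac'', by rw [ea, ec']; exact hcc.1⟩
            (fun h => hk02.ne (congrArg Prod.snd h))
            (fun h => (hk02.trans hcc.1).ne (congrArg Prod.snd h))
            (fun h => hcc.1.ne (congrArg Prod.snd h))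
          omega
        · -- disjoint case
          exfalso
          have ea : v a = b := by
            rw [hv, Equiv.Perm.mul_apply, Equiv.swap_apply_left,
              Equiv.swap_apply_of_ne_of_ne hbc hbc']
          have eb : v b = a := by
            rw [hv, Equiv.Perm.mul_apply, Equiv.swap_apply_right,
              Equiv.swap_apply_of_ne_of_ne hac hac']
          have ec : v c = c' := by
            have h1 : c ≠ a := fun h => hac h.symm
            have h2 : c ≠ b := fun h => hbc h.symm
            rw [hv, Equiv.Perm.mul_apply, Equiv.swap_apply_of_ne_of_ne h1 h2,
              Equiv.swap_apply_left]
          have ec' : v c' = c := by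
            have h1 : c' ≠ a := fun h => hac' h.symm
            have h2 : c' ≠ b := fun h => hbc' h.symm
            rw [hv, Equiv.Perm.mul_apply, Equiv.swap_apply_of_ne_of_ne h1 h2,
              Equiv.swap_apply_right]
          have hvk : v k0 < v a := by
            by_cases h1 : k0 = c
            · -- v k0 = c', need c' < b
              subst h1
              have hbig : c' < b := by
                rcases lt_trichotomy b c' with h | h | h
                · exact absurd h (hcc.2 hk02)
                · exact absurd h hbc'
                · exact h
              rw [ea, ec]
              exact hbig
            · by_cases h2 : k0 = c'
              · subst h2
                rw [ea, ec']
                exact hcc.1.trans hk02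
              · have h3 : k0 ≠ a := hk01.ne'
                have h4 : k0 ≠ b := hk02.ne
                have ek : v k0 = k0 := by
                  rw [hv, Equiv.Perm.mul_apply, Equiv.swap_apply_of_ne_of_ne h3 h4,
                    Equiv.swap_apply_of_ne_of_ne h1 h2]
                rw [ea, ek]
                exact hk02
          have h3 := three_le_len (v := v) (p := (a, b)) (q := (c, c')) (r := (a, k0))
            ⟨hab, by rw [ea, eb]; exact hab⟩
            ⟨hcc.1, by rw [ec, ec']; exact hcc.1⟩
            ⟨hk01, hvk⟩
            (fun h => hac (congrArg Prod.fst h))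
            (fun h => hk02.ne' (congrArg Prod.snd h))
            (fun h => hac (congrArg Prod.fst h).symm)
          omega

lemma covBy_right_unique {x b₁ b₂ : α} (h₁ : x ⋖ b₁) (h₂ : x ⋖ b₂) : b₁ = b₂ := by
  rcases lt_trichotomy b₁ b₂ with h | h | h
  · exact absurd h (h₂.2 h₁.1)
  · exact h
  · exact absurd h (h₁.2 h₂.1)

lemma covBy_left_unique {x a₁ a₂ : α} (h₁ : a₁ ⋖ x) (h₂ : a₂ ⋖ x) : a₁ = a₂ := by
  rcases lt_trichotomy a₁ a₂ with h | h | h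
  · exact absurd h₂.1 (h₁.2 h)
  · exact h
  · exact absurd h₁.1 (h₂.2 h)

lemma key3 {c c' a b : α} (hcc : c ⋖ c') (hab : a < b)
    (hlen : len (Equiv.swap c c' * Equiv.swap a b) = 2) :
    (a ⋖ b ∧ (a, b) ≠ (c, c')) ∨ (a = c ∧ c' ⋖ b) ∨ (b = c' ∧ a ⋖ c) := by
  by_cases hadj : a ⋖ b
  · refine Or.inl ⟨hadj, fun h => ?_⟩
    have h1 : a = c := congrArg Prod.fst h
    have h2 : b = c' := congrArg Prod.snd h
    rw [h1, h2, Equiv.swap_mul_self] at hlen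
    rw [len_one] at hlen
    omega
  · exact Or.inr (key_dichotomy hcc hab (exists_lt_lt_of_not_covBy hab hadj) hlen)

end Aux

theorem stmt15 {n : ℕ} (w : Equiv.Perm (Fin (n + 1)))
    (hsupp : ∀ i : Fin n, le (Equiv.swap i.castSucc i.succ) w) :
    ∀ u ∈ Pk w 1, udeg w u ≤ n + 1 := by
  letI : DecidableEq (Fin (n + 1)) := fun a b => LinearOrder.toDecidableEq a b
  rintro u ⟨huw, hlen⟩
  obtain ⟨c, c', hcc, hueq⟩ := len_eq_one_char hlen
  have hn : 1 ≤ n := by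
    have h1 : (c : ℕ) < (c' : ℕ) := hcc.1
    have h2 := c'.isLt
    omega
  set v₁ : Equiv.Perm (Fin (n + 1)) :=
    if h : (c' : ℕ) + 1 < n + 1 then u * Equiv.swap c ⟨(c' : ℕ) + 1, h⟩ else 1 with hv₁
  set v₂ : Equiv.Perm (Fin (n + 1)) :=
    if h : 0 < (c : ℕ) then
      u * Equiv.swap ⟨(c : ℕ) - 1, Nat.lt_of_le_of_lt (Nat.sub_le _ _) c.isLt⟩ c'
    else 1 with hv₂
  set A : Set (Equiv.Perm (Fin (n + 1))) :=
    (fun p : Fin (n + 1) × Fin (n + 1) => u * Equiv.swap p.1 p.2) ''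
      ({p : Fin (n + 1) × Fin (n + 1) | p.1 ⋖ p.2} \ {(c, c')}) with hA
  have hsub : {v | le v w ∧ covers u v} ⊆ A ∪ {v₁, v₂} := by
    rintro v ⟨hvw, hcov⟩
    obtain ⟨a, b, hab, hveq⟩ := covers_step hcov
    have hlv : len v = 2 := by have := hcov.2; omega
    obtain ⟨a, b, hab, hveq⟩ : ∃ a b, a < b ∧ v = u * Equiv.swap a b := by
      rcases hab.lt_or_gt with h | h
      · exact ⟨a, b, h, hveq⟩
      · exact ⟨b, a, h, by rwa [Equiv.swap_comm]⟩
    have hlen2 : len (Equiv.swap c c' * Equiv.swap a b) = 2 := by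
      rw [← hueq, ← hveq]; exact hlv
    rw [Set.mem_union, Set.mem_insert_iff, Set.mem_singleton_iff]
    rcases key3 hcc hab hlen2 with ⟨hadj, hne⟩ | ⟨rfl, hcb⟩ | ⟨rfl, hax⟩
    · exact Or.inl ⟨(a, b), ⟨hadj, by simpa using hne⟩, hveq.symm⟩
    · refine Or.inr (Or.inl ?_)
      have h1 : (c' : ℕ) + 1 = (b : ℕ) := Nat.covBy_iff_add_one_eq.mp (Fin.coe_covBy_iff.mpr hcb)
      have h2 : (c' : ℕ) + 1 < n + 1 := h1 ▸ b.isLt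
      have h3 : (⟨(c' : ℕ) + 1, h2⟩ : Fin (n + 1)) = b := Fin.ext h1
      rw [hv₁, dif_pos h2, h3, hveq]
    · refine Or.inr (Or.inr ?_)
      have h1 : (a : ℕ) + 1 = (c : ℕ) := Nat.covBy_iff_add_one_eq.mp (Fin.coe_covBy_iff.mpr hax)
      have h2 : 0 < (c : ℕ) := by omega
      have h3 : (⟨(c : ℕ) - 1, Nat.lt_of_le_of_lt (Nat.sub_le _ _) c.isLt⟩ : Fin (n + 1)) = a :=
        Fin.ext (show (c : ℕ) - 1 = (a : ℕ) by omega)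
      rw [hv₂, dif_pos h2, h3, hveq]
  have hP : ({p : Fin (n + 1) × Fin (n + 1) | p.1 ⋖ p.2}).ncard ≤ n := by
    have hsub2 : {p : Fin (n + 1) × Fin (n + 1) | p.1 ⋖ p.2} ⊆
        Set.range (fun x : Fin n => ((x.castSucc, x.succ) : Fin (n + 1) × Fin (n + 1))) := by
      rintro ⟨x, y⟩ hxy
      have h1 : (x : ℕ) ⋖ (y : ℕ) := Fin.coe_covBy_iff.mpr hxy
      have h2 : (x : ℕ) + 1 = (y : ℕ) := Nat.covBy_iff_add_one_eq.mp h1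
      have hy := y.isLt
      have hx : (x : ℕ) < n := by omega
      exact ⟨⟨(x : ℕ), hx⟩, Prod.ext (by simp [Fin.ext_iff]) (by simp [Fin.ext_iff, h2])⟩
    calc ({p : Fin (n + 1) × Fin (n + 1) | p.1 ⋖ p.2}).ncard
        ≤ (Set.range (fun x : Fin n =>
            ((x.castSucc, x.succ) : Fin (n + 1) × Fin (n + 1)))).ncard :=
          Set.ncard_le_ncard hsub2 (Set.toFinite _)
      _ ≤ (Set.univ : Set (Fin n)).ncard := by
          rw [← Set.image_univ]; exact Set.ncard_image_le (Set.toFinite _)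
      _ = n := by rw [Set.ncard_univ]; simp
  have hA1 : A.ncard ≤ n - 1 := by
    have hmem : ((c, c') : Fin (n + 1) × Fin (n + 1)) ∈
        {p : Fin (n + 1) × Fin (n + 1) | p.1 ⋖ p.2} := hcc
    have h1 := Set.ncard_diff_singleton_of_mem hmem
    calc A.ncard ≤ _ := Set.ncard_image_le (Set.toFinite _)
      _ ≤ n - 1 := by rw [h1]; omega
  calc udeg w u ≤ (A ∪ {v₁, v₂}).ncard := Set.ncard_le_ncard hsub (Set.toFinite _)
    _ ≤ A.ncard + ({v₁, v₂} : Set _).ncard := Set.ncard_union_le _ _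
    _ ≤ (n - 1) + 2 := add_le_add hA1 ((Set.ncard_insert_le _ _).trans (by simp))
    _ ≤ n + 1 := by omega
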